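/- Let T be a triangle. T satisfies the maximum angle condition with constant φ̄ < π (all interior angles ≤ φ̄) if and only if T satisfies the regular vertex property with a constant c̄ > 0 depending only on φ̄: there is a vertex p such that the two unit vectors l₁,l₂ along the edges emanating from p satisfy |det(l₁ l₂)| ≥ c̄. Conversely, the regular vertex property with constant c̄ implies the maximum angle condition with a bound φ̄(c̄) < π. -/

import Mathlib

open Real EuclideanGeometry

/-- The determinant of the matrix of unit vectors along the two edges emanating from the
vertex `p` of the triangle `pqr` (its absolute value is `sin` of the angle at `p`). -/
noncomputable def unitEdgeDet (p q r : EuclideanSpace ℝ (Fin 2)) : ℝ :=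
  (‖q - p‖⁻¹ • (q - p)) 0 * (‖r - p‖⁻¹ • (r - p)) 1 -
    (‖q - p‖⁻¹ • (q - p)) 1 * (‖r - p‖⁻¹ • (r - p)) 0

lemma abs_unitEdgeDet (p q r : EuclideanSpace ℝ (Fin 2)) (hq : q ≠ p) (hr : r ≠ p) :
    |unitEdgeDet p q r| = Real.sin (EuclideanGeometry.angle q p r) := by
  set u : EuclideanSpace ℝ (Fin 2) := ‖q - p‖⁻¹ • (q - p) with hu
  set v : EuclideanSpace ℝ (Fin 2) := ‖r - p‖⁻¹ • (r - p) with hv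
  have hqp : q - p ≠ 0 := sub_ne_zero.2 hq
  have hrp : r - p ≠ 0 := sub_ne_zero.2 hr
  have hnu : ‖u‖ = 1 := norm_smul_inv_norm hqp
  have hnv : ‖v‖ = 1 := norm_smul_inv_norm hrp
  have hang : EuclideanGeometry.angle q p r = InnerProductGeometry.angle u v := by
    rw [EuclideanGeometry.angle, hu, hv,
      InnerProductGeometry.angle_smul_left_of_pos _ _ (inv_pos.2 (norm_pos_iff.2 hqp)),
      InnerProductGeometry.angle_smul_right_of_pos _ _ (inv_pos.2 (norm_pos_iff.2 hrp))]
    congr 1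
  have hcos : Real.cos (InnerProductGeometry.angle u v) = (inner ℝ u v : ℝ) := by
    rw [InnerProductGeometry.cos_angle, hnu, hnv]
    simp
  have hinner : (inner ℝ u v : ℝ) = u 0 * v 0 + u 1 * v 1 := by
    simp [PiLp.inner_apply, Fin.sum_univ_two, RCLike.inner_apply, mul_comm]
  have hu2 : u 0 ^ 2 + u 1 ^ 2 = 1 := by
    have h : (inner ℝ u u : ℝ) = u 0 * u 0 + u 1 * u 1 := by
      rw [PiLp.inner_apply]; simp [ Fin.sum_univ_two, RCLike.inner_apply, mul_comm]; ring
    have h2 : (inner ℝ u u : ℝ) = 1 := by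
      rw [real_inner_self_eq_norm_sq, hnu]; norm_num
    nlinarith [h, h2]
  have hv2 : v 0 ^ 2 + v 1 ^ 2 = 1 := by
    have h : (inner ℝ v v : ℝ) = v 0 * v 0 + v 1 * v 1 := by
      rw [PiLp.inner_apply]; simp [ Fin.sum_univ_two, RCLike.inner_apply, mul_comm]; ring
    have h2 : (inner ℝ v v : ℝ) = 1 := by
      rw [real_inner_self_eq_norm_sq, hnv]; norm_num
    nlinarith [h, h2]
  have hθ := InnerProductGeometry.angle_nonneg u v
  have hθ' := InnerProductGeometry.angle_le_pi u v
  have hsin : Real.sin (InnerProductGeometry.angle u v) ≥ 0 :=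
    Real.sin_nonneg_of_nonneg_of_le_pi hθ hθ'
  have hsq : (unitEdgeDet p q r) ^ 2 = Real.sin (InnerProductGeometry.angle u v) ^ 2 := by
    have : Real.sin (InnerProductGeometry.angle u v) ^ 2 =
        1 - Real.cos (InnerProductGeometry.angle u v) ^ 2 := by
      have := Real.sin_sq_add_cos_sq (InnerProductGeometry.angle u v); linarith
    rw [this, hcos, hinner]
    have hd : unitEdgeDet p q r = u 0 * v 1 - u 1 * v 0 := by
      rw [unitEdgeDet, ← hu, ← hv]
    rw [hd]
    linear_combination (v 0 ^ 2 + v 1 ^ 2) * hu2 + hv2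
  rw [hang, ← abs_of_nonneg hsin, ← Real.sqrt_sq_eq_abs, ← Real.sqrt_sq_eq_abs, hsq]

/-- Lower bound on `sin` on an interval `[π/3, m] ⊆ (0, π)`. -/
lemma sin_lower {θ m : ℝ} (h1 : π / 3 ≤ θ) (h2 : θ ≤ m) (hm : m < π) :
    min (Real.sin (π / 3)) (Real.sin m) ≤ Real.sin θ := by
  have hpi := Real.pi_pos
  rcases le_or_gt θ (π / 2) with h | h
  · refine le_trans (min_le_left _ _) ?_
    exact Real.sin_le_sin_of_le_of_le_pi_div_two (by linarith) h h1
  · refine le_trans (min_le_right _ _) ?_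
    have : Real.sin m = Real.sin (π - m) := (Real.sin_pi_sub m).symm
    rw [this, ← Real.sin_pi_sub θ]
    exact Real.sin_le_sin_of_le_of_le_pi_div_two (by linarith) (by linarith) (by linarith)

/-- If `0 ≤ θ ≤ π` and `sin θ ≥ s` with `0 < s`, then `arcsin s ≤ θ`. -/
lemma arcsin_le_of_sin_ge {θ s : ℝ} (h0 : 0 ≤ θ) (hπ : θ ≤ π) (hs : s ≤ Real.sin θ) :
    Real.arcsin s ≤ θ := by
  rcases le_or_gt θ (π / 2) with h | h
  · calc Real.arcsin s ≤ Real.arcsin (Real.sin θ) := Real.monotone_arcsin hs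
      _ = θ := Real.arcsin_sin (by linarith [Real.pi_pos]) h
  · exact le_trans (Real.arcsin_le_pi_div_two s) h.le

/-- For triangles the maximum angle condition and the regular vertex property are
equivalent: (i) for every `φ̄ < π` there is `c̄ > 0` (depending only on `φ̄`) such that any
nondegenerate triangle with all interior angles `≤ φ̄` has a vertex at which the unit edge
vectors satisfy `|det| ≥ c̄`; (ii) conversely, for every `c̄ > 0` there is `φ̄ < π` such
that any nondegenerate triangle possessing a vertex with `|det| ≥ c̄` has all interior
angles `≤ φ̄`. -/
theorem mac_iff_rvp_triangle :
    (∀ φ : ℝ, φ < π → ∃ c : ℝ, 0 < c ∧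
      ∀ A B C : EuclideanSpace ℝ (Fin 2), AffineIndependent ℝ ![A, B, C] →
        EuclideanGeometry.angle B A C ≤ φ → EuclideanGeometry.angle A B C ≤ φ →
        EuclideanGeometry.angle A C B ≤ φ →
        (c ≤ |unitEdgeDet A B C| ∨ c ≤ |unitEdgeDet B A C| ∨ c ≤ |unitEdgeDet C A B|)) ∧
    (∀ c : ℝ, 0 < c → ∃ φ : ℝ, φ < π ∧
      ∀ A B C : EuclideanSpace ℝ (Fin 2), AffineIndependent ℝ ![A, B, C] →
        (c ≤ |unitEdgeDet A B C| ∨ c ≤ |unitEdgeDet B A C| ∨ c ≤ |unitEdgeDet C A B|) →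
        (EuclideanGeometry.angle B A C ≤ φ ∧ EuclideanGeometry.angle A B C ≤ φ ∧
          EuclideanGeometry.angle A C B ≤ φ)) := by
  have hpi := Real.pi_pos
  constructor
  · -- (i) max angle condition ⇒ regular vertex property
    intro φ hφ
    set m : ℝ := max φ (π / 3) with hm
    have hmπ : m < π := max_lt hφ (by linarith)
    have hmpos : 0 < m := lt_of_lt_of_le (by linarith) (le_max_right _ _)
    refine ⟨min (Real.sin (π / 3)) (Real.sin m), lt_min ?_ ?_, ?_⟩
    · exact Real.sin_pos_of_pos_of_lt_pi (by linarith) (by linarith)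
    · exact Real.sin_pos_of_pos_of_lt_pi hmpos hmπ
    intro A B C hind hA hB hC
    have hinj := hind.injective
    have hBA : B ≠ A := fun h => by
      have : (1 : Fin 3) = 0 := hinj (by simpa [Matrix.cons_val_zero, Matrix.cons_val_one] using h)
      simp at this
    have hCA : C ≠ A := fun h => by
      have : (2 : Fin 3) = 0 := hinj (by simpa using h)
      simp at this
    have hCB : C ≠ B := fun h => by
      have : (2 : Fin 3) = 1 := hinj (by simpa using h)
      simp at this
    have hsum : EuclideanGeometry.angle A B C + EuclideanGeometry.angle B C A +
        EuclideanGeometry.angle C A B = π :=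
      EuclideanGeometry.angle_add_angle_add_angle_eq_pi C hBA
    rw [EuclideanGeometry.angle_comm B C A, EuclideanGeometry.angle_comm C A B] at hsum
    -- hsum : ∠ A B C + ∠ A C B + ∠ B A C = π
    have hdA : |unitEdgeDet A B C| = Real.sin (EuclideanGeometry.angle B A C) :=
      abs_unitEdgeDet A B C hBA hCA
    have hdB : |unitEdgeDet B A C| = Real.sin (EuclideanGeometry.angle A B C) :=
      abs_unitEdgeDet B A C (fun h => hBA h.symm) (fun h => hCB h)
    have hdC : |unitEdgeDet C A B| = Real.sin (EuclideanGeometry.angle A C B) :=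
      abs_unitEdgeDet C A B (fun h => hCA h.symm) (fun h => hCB h.symm)
    rcases le_total (EuclideanGeometry.angle B A C) (EuclideanGeometry.angle A B C) with h1 | h1
    · rcases le_total (EuclideanGeometry.angle A B C) (EuclideanGeometry.angle A C B) with h2 | h2
      · -- angle at C is largest
        right; right
        rw [hdC]
        exact sin_lower (by linarith) (le_trans hC (le_max_left _ _)) hmπ
      · -- angle at B is largest
        right; left
        rw [hdB]
        have h3 : EuclideanGeometry.angle A C B ≤ EuclideanGeometry.angle A B C := h2
        exact sin_lower (by linarith) (le_trans hB (le_max_left _ _)) hmπ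
    · rcases le_total (EuclideanGeometry.angle B A C) (EuclideanGeometry.angle A C B) with h2 | h2
      · right; right
        rw [hdC]
        exact sin_lower (by linarith) (le_trans hC (le_max_left _ _)) hmπ
      · left
        rw [hdA]
        exact sin_lower (by linarith) (le_trans hA (le_max_left _ _)) hmπ
  · -- (ii) regular vertex property ⇒ max angle condition
    intro c hc
    set s : ℝ := min c 1 with hs
    have hs0 : 0 < s := lt_min hc one_pos
    have hs1 : s ≤ 1 := min_le_right _ _
    have harc : 0 < Real.arcsin s := Real.arcsin_pos.2 hs0
    refine ⟨π - Real.arcsin s, by linarith, ?_⟩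
    intro A B C hind hdet
    have hinj := hind.injective
    have hBA : B ≠ A := fun h => by
      have : (1 : Fin 3) = 0 := hinj (by simpa using h)
      simp at this
    have hCA : C ≠ A := fun h => by
      have : (2 : Fin 3) = 0 := hinj (by simpa using h)
      simp at this
    have hCB : C ≠ B := fun h => by
      have : (2 : Fin 3) = 1 := hinj (by simpa using h)
      simp at this
    have hsum : EuclideanGeometry.angle A B C + EuclideanGeometry.angle B C A +
        EuclideanGeometry.angle C A B = π :=
      EuclideanGeometry.angle_add_angle_add_angle_eq_pi C hBA
    rw [EuclideanGeometry.angle_comm B C A, EuclideanGeometry.angle_comm C A B] at hsum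
    have hA0 := EuclideanGeometry.angle_nonneg B A C
    have hB0 := EuclideanGeometry.angle_nonneg A B C
    have hC0 := EuclideanGeometry.angle_nonneg A C B
    have hAπ := EuclideanGeometry.angle_le_pi B A C
    have hBπ := EuclideanGeometry.angle_le_pi A B C
    have hCπ := EuclideanGeometry.angle_le_pi A C B
    -- key step: if sin θ ≥ c at one vertex, then arcsin s ≤ θ ≤ π - arcsin s
    have key : ∀ θ : ℝ, 0 ≤ θ → θ ≤ π → c ≤ Real.sin θ →
        Real.arcsin s ≤ θ ∧ θ ≤ π - Real.arcsin s := by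
      intro θ h0 hπ' hθ
      have hsθ : s ≤ Real.sin θ := le_trans (min_le_left _ _) hθ
      constructor
      · exact arcsin_le_of_sin_ge h0 hπ' hsθ
      · have h2 : Real.arcsin s ≤ π - θ := by
          apply arcsin_le_of_sin_ge (by linarith) (by linarith)
          rwa [Real.sin_pi_sub]
        linarith
    have hdA : |unitEdgeDet A B C| = Real.sin (EuclideanGeometry.angle B A C) :=
      abs_unitEdgeDet A B C hBA hCA
    have hdB : |unitEdgeDet B A C| = Real.sin (EuclideanGeometry.angle A B C) :=
      abs_unitEdgeDet B A C (fun h => hBA h.symm) (fun h => hCB h)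
    have hdC : |unitEdgeDet C A B| = Real.sin (EuclideanGeometry.angle A C B) :=
      abs_unitEdgeDet C A B (fun h => hCA h.symm) (fun h => hCB h.symm)
    rcases hdet with h | h | h
    · rw [hdA] at h
      obtain ⟨k1, k2⟩ := key _ hA0 hAπ h
      exact ⟨k2, by linarith, by linarith⟩
    · rw [hdB] at h
      obtain ⟨k1, k2⟩ := key _ hB0 hBπ h
      exact ⟨by linarith, k2, by linarith⟩
    · rw [hdC] at h
      obtain ⟨k1, k2⟩ := key _ hC0 hCπ h
      exact ⟨by linarith, by linarith, k2⟩
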